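/- arXiv:2005.02967 — 4 statements merged into one kernel-verified Lean document; each statement's English description precedes it below -/
import Mathlib

section
/- Let H be a complex Hilbert space and let (a_t)_{t∈ℝ} and (b_t)_{t∈ℝ} be strongly continuous one-parameter groups of unitary operators on H. Assume that for every t ∈ ℝ and every bounded operator S on H one has a_t ∘ S ∘ b_t = b_{−t} ∘ S ∘ a_{−t}. Then a_t = b_{−t} for all t ∈ ℝ. -/
/-- If `(a_t)` and `(b_t)` are strongly continuous one-parameter groups of unitary operators
on a complex Hilbert space `H` such that `a_t ∘ S ∘ b_t = b_{-t} ∘ S ∘ a_{-t}` for every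
bounded operator `S` and every `t ∈ ℝ`, then `a_t = b_{-t}` for all `t`. -/
theorem quantum_disk_stmt0
    {H : Type*} [NormedAddCommGroup H] [InnerProductSpace ℂ H] [CompleteSpace H]
    (a b : ℝ → (H →L[ℂ] H))
    (ha_unitary : ∀ t, a t ∈ unitary (H →L[ℂ] H))
    (hb_unitary : ∀ t, b t ∈ unitary (H →L[ℂ] H))
    (ha_zero : a 0 = 1) (hb_zero : b 0 = 1)
    (ha_add : ∀ s t, a (s + t) = a s ∘L a t)
    (hb_add : ∀ s t, b (s + t) = b s ∘L b t)
    (ha_cont : ∀ ξ : H, Continuous fun t => a t ξ)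
    (hb_cont : ∀ ξ : H, Continuous fun t => b t ξ)
    (hJ : ∀ (t : ℝ) (S : H →L[ℂ] H), a t ∘L S ∘L b t = b (-t) ∘L S ∘L a (-t)) :
    ∀ t : ℝ, a t = b (-t) := by
  -- trivial case: H is a subsingleton
  by_cases hH : Subsingleton H
  · intro t; exact Subsingleton.elim _ _
  have : Nontrivial H := not_subsingleton_iff_nontrivial.mp hH
  obtain ⟨ξ, hξ⟩ := exists_ne (0 : H)
  -- restate composition as multiplication
  have ha_add' : ∀ s t, a (s + t) = a s * a t := ha_add
  have hb_add' : ∀ s t, b (s + t) = b s * b t := hb_add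
  have hJ' : ∀ (t : ℝ) (S : H →L[ℂ] H),
      a t * (S * b t) = b (-t) * (S * a (-t)) := hJ
  have haa : ∀ t, a t * a (-t) = 1 := fun t => by
    rw [← ha_add']; simp [ha_zero]
  have hbb : ∀ t, b t * b (-t) = 1 := fun t => by
    rw [← hb_add']; simp [hb_zero]
  -- key identity: u s * S * u s = S where u s = b s * a s
  have key : ∀ (s : ℝ) (S : H →L[ℂ] H),
      (b s * a s) * S * (b s * a s) = S := by
    intro s S
    have h := hJ' s S
    calc (b s * a s) * S * (b s * a s)
        = b s * (a s * (S * b s)) * a s := by noncomm_ring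
      _ = b s * (b (-s) * (S * a (-s))) * a s := by rw [h]
      _ = (b s * b (-s)) * S * (a (-s) * a s) := by noncomm_ring
      _ = S := by
          have h1 := hbb s
          have h2 := haa (-s)
          rw [neg_neg] at h2
          rw [h1, h2, one_mul, mul_one]
  have hu2 : ∀ s : ℝ, (b s * a s) * (b s * a s) = 1 := by
    intro s
    calc (b s * a s) * (b s * a s) = (b s * a s) * 1 * (b s * a s) := by
          rw [mul_one]
      _ = 1 := key s 1
  -- u s commutes with every S
  have hcomm : ∀ (s : ℝ) (S : H →L[ℂ] H),
      (b s * a s) * S = S * (b s * a s) := by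
    intro s S
    have h := key s S
    calc (b s * a s) * S
        = ((b s * a s) * S * (b s * a s)) * (b s * a s) := by
          rw [mul_assoc ((b s * a s) * S), hu2, mul_one]
      _ = S * (b s * a s) := by rw [h]
  -- hence u s is a scalar
  have hscal : ∀ s : ℝ, ∃ c : ℂ, ∀ η : H, (b s * a s) η = c • η := by
    intro s
    refine ⟨(inner ℂ ξ ξ : ℂ)⁻¹ * (inner ℂ ξ ((b s * a s) ξ) : ℂ), fun η => ?_⟩
    have hS := hcomm s ((innerSL ℂ ξ).smulRight η)
    have happ := congrArg (fun T : H →L[ℂ] H => T ξ) hS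
    simp only [ContinuousLinearMap.mul_apply, ContinuousLinearMap.smulRight_apply,
      innerSL_apply_apply, map_smul] at happ
    have hinner : (inner ℂ ξ ξ : ℂ) ≠ 0 := inner_self_ne_zero.mpr hξ
    have h2 : (inner ℂ ξ ξ : ℂ) • ((b s * a s) η)
        = (inner ℂ ξ ((b s * a s) ξ) : ℂ) • η := by
      simpa [ContinuousLinearMap.mul_apply] using happ
    calc (b s * a s) η
        = (inner ℂ ξ ξ : ℂ)⁻¹ • ((inner ℂ ξ ξ : ℂ) • (b s * a s) η) := by
          rw [smul_smul, inv_mul_cancel₀ hinner, one_smul]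
      _ = (inner ℂ ξ ξ : ℂ)⁻¹ • ((inner ℂ ξ ((b s * a s) ξ) : ℂ) • η) := by rw [h2]
      _ = _ := by rw [smul_smul]
  -- conclude
  intro t
  obtain ⟨c, hc⟩ := hscal (t / 2)
  have hc' : ∀ η : H, (b (t / 2)) ((a (t / 2)) η) = c • η := hc
  have hc2 : c * c = 1 := by
    have h : (b (t / 2) * a (t / 2)) ((b (t / 2) * a (t / 2)) ξ) = ξ := by
      rw [← ContinuousLinearMap.mul_apply, hu2, ContinuousLinearMap.one_apply]
    rw [hc, hc, smul_smul] at h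
    have h0 : (c * c - 1) • ξ = 0 := by rw [sub_smul, one_smul, h, sub_self]
    rcases smul_eq_zero.mp h0 with h' | h'
    · exact sub_eq_zero.mp h'
    · exact absurd h' hξ
  have hbt : b t = b (t / 2) * b (t / 2) := by rw [← hb_add', add_halves]
  have hat : a t = a (t / 2) * a (t / 2) := by rw [← ha_add', add_halves]
  have hut : ∀ η : H, (b t) ((a t) η) = η := by
    intro η
    rw [hbt, hat]
    simp only [ContinuousLinearMap.mul_apply]
    rw [hc', map_smul, hc', smul_smul, hc2, one_smul]
  ext η
  show a t η = b (-t) η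
  have h2 : b (-t) ((b t) ((a t) η)) = a t η := by
    have := congrArg (fun T : H →L[ℂ] H => T (a t η)) (hbb (-t))
    simpa [ContinuousLinearMap.mul_apply, neg_neg] using this
  rw [hut η] at h2
  exact h2.symm
end

section
/- Let H be a complex Hilbert space and let D be a compact, injective, positive (self-adjoint with nonnegative spectrum) bounded operator on H. For q > 0 write H_q = ker(D − q·1) for the eigenspace of D at q; each H_q with q an eigenvalue of D is finite-dimensional. Let B be a bounded positive operator on H commuting with D (so B preserves each H_q). Let ρ > 1 and let F be a bounded operator on H with finite-dimensional kernel such that F ∘ B = B ∘ F and F(H_q) ⊆ H_{ρq} for every q > 0. For each eigenvalue q of D let Δ_q denote the set of eigenvalues of the restriction of B to the finite-dimensional space H_q. Then the union ⋃_q Δ_q, taken over all eigenvalues q of D, is a finite set. -/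
/-- Let `D` be a compact, injective, positive bounded operator on a complex Hilbert space `H`,
with eigenspaces `H_q = ker (D - q·1)`.  Let `B` be a bounded positive operator commuting
with `D`, let `ρ > 1`, and let `F` be a bounded operator with finite-dimensional kernel,
commuting with `B` and satisfying `F (H_q) ⊆ H_{ρ q}` for all `q > 0`.  Then the union over
all eigenvalues `q` of `D` of the sets `Δ_q` of eigenvalues of the restriction of `B` to
`H_q` is a finite set. -/
theorem quantum_disk_stmt2
    {H : Type*} [NormedAddCommGroup H] [InnerProductSpace ℂ H] [CompleteSpace H]
    (D B F : H →L[ℂ] H)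
    (hD_compact : IsCompactOperator ⇑D)
    (hD_inj : Function.Injective ⇑D)
    (hD_pos : D.IsPositive)
    (hB_pos : B.IsPositive)
    (hBD : B ∘L D = D ∘L B)
    (ρ : ℝ) (hρ : 1 < ρ)
    (hF_ker : FiniteDimensional ℂ (LinearMap.ker (F : H →ₗ[ℂ] H)))
    (hFB : F ∘L B = B ∘L F)
    (hF_shift : ∀ q : ℝ, 0 < q →
      ∀ ξ ∈ LinearMap.ker (((D - (q : ℂ) • (1 : H →L[ℂ] H) : H →L[ℂ] H) : H →ₗ[ℂ] H)),
        F ξ ∈ LinearMap.ker (((D - ((ρ * q : ℝ) : ℂ) • (1 : H →L[ℂ] H) : H →L[ℂ] H) : H →ₗ[ℂ] H))) :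
    Set.Finite
      (⋃ q ∈ {q : ℝ | LinearMap.ker (((D - (q : ℂ) • (1 : H →L[ℂ] H) : H →L[ℂ] H) : H →ₗ[ℂ] H)) ≠ ⊥},
        {c : ℝ | ∃ ξ ∈ LinearMap.ker (((D - (q : ℂ) • (1 : H →L[ℂ] H) : H →L[ℂ] H) : H →ₗ[ℂ] H)),
          ξ ≠ 0 ∧ B ξ = (c : ℂ) • ξ}) := by
  classical
  -- B maps ker F into itself
  have hBker : ∀ η ∈ LinearMap.ker (F : H →ₗ[ℂ] H), B η ∈ LinearMap.ker (F : H →ₗ[ℂ] H) := by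
    intro η hη
    have : F (B η) = B (F η) := congrFun (congrArg DFunLike.coe hFB) η
    simp only [LinearMap.mem_ker, ContinuousLinearMap.coe_coe] at hη ⊢
    rw [show F (B η) = B (F η) from this, hη, map_zero]
  -- restriction of B to ker F
  set K : Submodule ℂ H := LinearMap.ker (F : H →ₗ[ℂ] H) with hK
  let T : Module.End ℂ K :=
    (B.toLinearMap).restrict (p := K) (q := K) hBker
  have hTfin : Set.Finite (setOf T.HasEigenvalue) := Module.End.finite_hasEigenvalue T
  apply Set.Finite.subset ((hTfin.image Complex.re))
  rintro c hc
  simp only [Set.mem_iUnion, Set.mem_setOf_eq] at hc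
  obtain ⟨q, hq, ξ, hξmem, hξne, hBξ⟩ := hc
  -- membership in eigenspace means D x = q x
  have memiff : ∀ (r : ℝ) (x : H),
      x ∈ LinearMap.ker (((D - (r : ℂ) • (1 : H →L[ℂ] H) : H →L[ℂ] H) : H →ₗ[ℂ] H)) ↔ D x = (r : ℂ) • x := by
    intro r x
    simp [LinearMap.mem_ker, sub_eq_zero]
  have hDξ : D ξ = (q : ℂ) • ξ := (memiff q ξ).mp hξmem
  -- q > 0
  have hq0 : 0 < q := by
    rcases lt_trichotomy q 0 with h | h | h
    · exfalso
      have hre := hD_pos.2 ξ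
      rw [ContinuousLinearMap.reApplyInnerSelf_apply, hDξ] at hre
      rw [inner_smul_left] at hre
      simp only [Complex.conj_ofReal] at hre
      have : (0:ℝ) ≤ q * ‖ξ‖ ^ 2 := by
        simpa [Complex.ofReal_mul, ← inner_self_eq_norm_sq (𝕜 := ℂ) ξ] using hre
      nlinarith [sq_pos_of_ne_zero (a := ‖ξ‖) (norm_ne_zero_iff.mpr hξne),
        sq_nonneg ‖ξ‖]
    · exfalso
      apply hξne
      have : D ξ = D 0 := by rw [hDξ, h]; simp
      exact hD_inj this
    · exact h
  -- iterates
  have hiter : ∀ n : ℕ, ((F ^ n) ξ ∈ LinearMap.ker (((D - ((ρ ^ n * q : ℝ) : ℂ) • (1 : H →L[ℂ] H) : H →L[ℂ] H) : H →ₗ[ℂ] H)))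
      ∧ B ((F ^ n) ξ) = (c : ℂ) • (F ^ n) ξ := by
    intro n
    induction n with
    | zero => simpa using ⟨hξmem, hBξ⟩
    | succ n ih =>
      constructor
      · have h1 := hF_shift (ρ ^ n * q) (by positivity) _ ih.1
        have : ρ * (ρ ^ n * q) = ρ ^ (n + 1) * q := by ring
        rw [this] at h1
        have hstep : (F ^ (n + 1)) ξ = F ((F ^ n) ξ) := by
          rw [pow_succ']; rfl
        rw [hstep]; exact h1
      · have hstep : (F ^ (n + 1)) ξ = F ((F ^ n) ξ) := by
          rw [pow_succ']; rfl
        rw [hstep]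
        have hcomm : B (F ((F ^ n) ξ)) = F (B ((F ^ n) ξ)) :=
          (congrFun (congrArg DFunLike.coe hFB) ((F ^ n) ξ)).symm
        rw [hcomm, ih.2, map_smul]
  -- eventually zero
  have hzero : ∃ n : ℕ, (F ^ n) ξ = 0 := by
    obtain ⟨n, hn⟩ := pow_unbounded_of_one_lt (‖D‖ / q) hρ
    refine ⟨n, ?_⟩
    by_contra hne
    have hmem := (hiter n).1
    have hD' : D ((F ^ n) ξ) = ((ρ ^ n * q : ℝ) : ℂ) • (F ^ n) ξ := (memiff _ _).mp hmem
    have h1 : ‖D ((F ^ n) ξ)‖ = (ρ ^ n * q) * ‖(F ^ n) ξ‖ := by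
      rw [hD', norm_smul, Complex.norm_real, Real.norm_eq_abs, abs_of_pos (show (0:ℝ) < ρ ^ n * q by positivity)]
    have h2 := D.le_opNorm ((F ^ n) ξ)
    rw [h1] at h2
    have hpos : 0 < ‖(F ^ n) ξ‖ := norm_pos_iff.mpr hne
    have : ρ ^ n * q ≤ ‖D‖ := le_of_mul_le_mul_right h2 hpos
    have h3 : ‖D‖ < ρ ^ n * q := (div_lt_iff₀ hq0).mp hn
    linarith
  -- minimal index
  have h0 : (F ^ 0) ξ ≠ 0 := by simpa using hξne
  obtain ⟨m, hm⟩ : ∃ m : ℕ, (F ^ m) ξ ≠ 0 ∧ (F ^ (m + 1)) ξ = 0 := by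
    obtain ⟨n, hn⟩ := hzero
    induction n with
    | zero => exact absurd hn h0
    | succ n ih =>
      by_cases h : (F ^ n) ξ = 0
      · exact ih h
      · exact ⟨n, h, hn⟩
  set η : H := (F ^ m) ξ with hη
  have hηK : η ∈ K := by
    rw [hK, LinearMap.mem_ker, ContinuousLinearMap.coe_coe]
    have : (F ^ (m + 1)) ξ = F η := by rw [pow_succ']; rfl
    rw [← this, hm.2]
  have hBη : B η = (c : ℂ) • η := (hiter m).2
  -- eigenvalue of T
  have hT : T.HasEigenvalue (c : ℂ) := by
    apply Module.End.hasEigenvalue_of_hasEigenvector (x := ⟨η, hηK⟩)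
    constructor
    · rw [Module.End.mem_eigenspace_iff]
      apply Subtype.ext
      simpa [T, LinearMap.restrict_apply] using hBη
    · simp [Subtype.ext_iff, hm.1]
  exact ⟨(c : ℂ), hT, by simp⟩
end

section
/- Every compact operator on ℓ²(ℕ) belongs to the Toeplitz algebra T, i.e. to the smallest C*-subalgebra of B(ℓ²(ℕ)) containing the unilateral shift s. -/
set_option synthInstance.maxHeartbeats 1000000
set_option maxHeartbeats 1000000

noncomputable section QuantumDiskAux

namespace QuantumDiskAux

abbrev H2 : Type := lp (fun _ : ℕ => ℂ) 2

/-- The standard basis vectors of `ℓ²(ℕ)`. -/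
def ee (n : ℕ) : H2 := lp.single 2 n (1:ℂ)

/-- The rank one operator `x ↦ ⟪v, x⟫ • u`. -/
def Rk (u v : H2) : H2 →L[ℂ] H2 := (innerSL ℂ v).smulRight u

lemma Rk_apply (u v x : H2) : Rk u v x = (inner ℂ v x : ℂ) • u := rfl

lemma inner_ee (n : ℕ) (f : H2) : (inner ℂ (ee n) f : ℂ) = f n := by
  simp [ee, lp.inner_single_left]

lemma smul_ee (n : ℕ) (c : ℂ) : c • ee n = lp.single 2 n c := by
  simp [ee, ← lp.single_smul]

lemma ext_basis (f g : H2 →L[ℂ] H2) (h : ∀ n, f (ee n) = g (ee n)) : f = g := by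
  refine ContinuousLinearMap.ext fun x => ?_
  have hx : HasSum (fun k : ℕ => lp.single 2 k (x k)) x := lp.hasSum_single (by norm_num) x
  have hf : HasSum (fun k : ℕ => f (lp.single 2 k (x k))) (f x) := hx.mapL f
  have hg : HasSum (fun k : ℕ => g (lp.single 2 k (x k))) (g x) := hx.mapL g
  refine hf.unique ?_
  convert hg using 2 with k
  rw [← smul_ee, map_smul, map_smul, h k]

variable (s : H2 →L[ℂ] H2)

lemma pow_s (hs : ∀ n : ℕ, s (ee n) = ee (n + 1)) (i n : ℕ) : (s^i) (ee n) = ee (n+i) := by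
  induction i generalizing n with
  | zero => simp
  | succ i ih =>
    rw [pow_succ, ContinuousLinearMap.mul_apply, hs, ih]
    congr 1; omega

lemma adj_ee_zero (hs : ∀ n : ℕ, s (ee n) = ee (n + 1)) :
    (ContinuousLinearMap.adjoint s) (ee 0) = 0 := by
  apply lp.ext; funext k
  have h : ((ContinuousLinearMap.adjoint s) (ee 0)) k
      = (inner ℂ (ee k) ((ContinuousLinearMap.adjoint s) (ee 0)) : ℂ) := (inner_ee _ _).symm
  rw [h, ContinuousLinearMap.adjoint_inner_right, hs, inner_ee]
  simp [ee, lp.single_apply]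

lemma adj_ee_succ (hs : ∀ n : ℕ, s (ee n) = ee (n + 1)) (m : ℕ) :
    (ContinuousLinearMap.adjoint s) (ee (m+1)) = ee m := by
  apply lp.ext; funext k
  have h : ((ContinuousLinearMap.adjoint s) (ee (m+1))) k
      = (inner ℂ (ee k) ((ContinuousLinearMap.adjoint s) (ee (m+1))) : ℂ) := (inner_ee _ _).symm
  rw [h, ContinuousLinearMap.adjoint_inner_right, hs, inner_ee]
  simp [ee, lp.single_apply, Pi.single_apply]

lemma pow_adj (hs : ∀ n : ℕ, s (ee n) = ee (n + 1)) (j n : ℕ) :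
    ((ContinuousLinearMap.adjoint s)^j) (ee n) = if n < j then 0 else ee (n - j) := by
  induction j generalizing n with
  | zero => simp
  | succ j ih =>
    rw [pow_succ, ContinuousLinearMap.mul_apply]
    rcases n with _ | m
    · rw [adj_ee_zero s hs, map_zero, if_pos (by omega)]
    · rw [adj_ee_succ s hs, ih]
      by_cases h2 : m < j
      · rw [if_pos h2, if_pos (by omega)]
      · rw [if_neg h2, if_neg (by omega)]
        congr 1; omega

lemma Rk_ee_eq (hs : ∀ n : ℕ, s (ee n) = ee (n + 1)) (i j : ℕ) :
    Rk (ee i) (ee j) = s^i * (1 - s * star s) * (star s)^j := by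
  apply ext_basis
  intro n
  rw [ContinuousLinearMap.mul_apply, ContinuousLinearMap.mul_apply,
    ContinuousLinearMap.star_eq_adjoint, pow_adj s hs, Rk_apply, inner_ee]
  by_cases hnj : n < j
  · rw [if_pos hnj]
    have : (ee n : ∀ _:ℕ, ℂ) j = 0 := by simp [ee, lp.single_apply, Pi.single_apply]; omega
    rw [this]
    simp
  · rw [if_neg hnj]
    rcases Nat.lt_or_ge j n with h | h
    · have h0 : (ee n : ∀ _:ℕ, ℂ) j = 0 := by simp [ee, lp.single_apply, Pi.single_apply]; omega
      rw [h0]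
      obtain ⟨m, hm⟩ : ∃ m, n - j = m + 1 := ⟨n - j - 1, by omega⟩
      rw [hm]
      simp only [ContinuousLinearMap.sub_apply, ContinuousLinearMap.one_apply,
        ContinuousLinearMap.mul_apply, ContinuousLinearMap.star_eq_adjoint,
        adj_ee_succ s hs, hs, zero_smul, map_zero]
      rw [sub_self, map_zero]
    · have hnj' : n = j := by omega
      subst hnj'
      have h1 : (ee n : ∀ _:ℕ, ℂ) n = 1 := by simp [ee, lp.single_apply]
      rw [h1, Nat.sub_self, one_smul]
      simp only [ContinuousLinearMap.sub_apply, ContinuousLinearMap.one_apply,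
        ContinuousLinearMap.mul_apply, ContinuousLinearMap.star_eq_adjoint,
        adj_ee_zero s hs, map_zero, sub_zero]
      rw [pow_s s hs]
      congr 1; omega

lemma Rk_continuous : Continuous (fun p : H2 × H2 => Rk p.1 p.2) := by
  have h1 : Continuous (fun p : H2 × H2 => ((innerSL ℂ p.2 : H2 →L[ℂ] ℂ), p.1)) :=
    ((innerSL ℂ (E := H2)).continuous.comp continuous_snd).prodMk continuous_fst
  exact isBoundedBilinearMap_smulRight.continuous.comp h1

lemma Rk_sum_sum (m : ℕ) (u v : H2) :
    Rk (∑ i ∈ Finset.range m, lp.single 2 i (u i)) (∑ j ∈ Finset.range m, lp.single 2 j (v j))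
      = ∑ i ∈ Finset.range m, ∑ j ∈ Finset.range m,
          ((u i) * starRingEnd ℂ (v j)) • Rk (ee i) (ee j) := by
  refine ContinuousLinearMap.ext fun x => ?_
  simp only [Rk_apply, ContinuousLinearMap.coe_sum', Finset.sum_apply,
    ContinuousLinearMap.coe_smul', Pi.smul_apply, Rk_apply, sum_inner, Finset.sum_smul]
  have : ∀ j ∈ Finset.range m,
      (inner ℂ (lp.single 2 j (v j)) x : ℂ) • ∑ i ∈ Finset.range m, lp.single 2 i (u i)
      = ∑ i ∈ Finset.range m, (inner ℂ (lp.single 2 j (v j)) x : ℂ) • lp.single 2 i (u i) :=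
    fun j _ => Finset.smul_sum
  rw [Finset.sum_congr rfl this, Finset.sum_comm]
  refine Finset.sum_congr rfl fun i _ => Finset.sum_congr rfl fun j _ => ?_
  rw [← smul_ee (c := u i), ← smul_ee (c := v j), inner_smul_left]
  simp only [smul_smul]
  congr 1
  ring

lemma Rk_mem (hs : ∀ n : ℕ, s (ee n) = ee (n + 1)) (u v : H2) :
    Rk u v ∈ StarAlgebra.elemental ℂ s := by
  have hmem : ∀ m : ℕ,
      Rk (∑ i ∈ Finset.range m, lp.single 2 i (u i))
        (∑ j ∈ Finset.range m, lp.single 2 j (v j)) ∈ StarAlgebra.elemental ℂ s := by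
    intro m
    rw [Rk_sum_sum]
    refine sum_mem fun i _ => sum_mem fun j _ => ?_
    refine StarSubalgebra.smul_mem _ ?_ _
    rw [Rk_ee_eq s hs]
    have hself := StarAlgebra.elemental.self_mem ℂ s
    exact mul_mem
      (mul_mem (pow_mem hself i)
        (sub_mem (one_mem _) (mul_mem hself (star_mem hself))))
      (pow_mem (star_mem hself) j)
  have hu := (lp.hasSum_single (E := fun _ : ℕ => ℂ) (p := 2) (by norm_num) u).tendsto_sum_nat
  have hv := (lp.hasSum_single (E := fun _ : ℕ => ℂ) (p := 2) (by norm_num) v).tendsto_sum_nat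
  have hT : Filter.Tendsto
      (fun m => ((∑ i ∈ Finset.range m, lp.single 2 i (u i) : H2),
        (∑ j ∈ Finset.range m, lp.single 2 j (v j) : H2))) Filter.atTop (nhds (u, v)) :=
    hu.prodMk_nhds hv
  have hTT := (Rk_continuous.tendsto (u, v)).comp hT
  exact (StarAlgebra.elemental.isClosed ℂ s).mem_of_tendsto hTT
    (Filter.Eventually.of_forall hmem)

/-- Complement of the truncation to the first `n` coordinates. -/
def Q (n : ℕ) : H2 →L[ℂ] H2 := 1 - ∑ k ∈ Finset.range n, Rk (ee k) (ee k)

lemma Q_apply (n : ℕ) (y : H2) :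
    Q n y = y - ∑ k ∈ Finset.range n, lp.single 2 k (y k) := by
  simp only [Q, ContinuousLinearMap.sub_apply, ContinuousLinearMap.one_apply,
    ContinuousLinearMap.coe_sum', Finset.sum_apply, Rk_apply, inner_ee, smul_ee]

lemma Q_norm_le (n : ℕ) (y : H2) : ‖Q n y‖ ≤ ‖y‖ := by
  rw [Q_apply]
  have hp : 0 < (2 : ENNReal).toReal := by norm_num
  have h := lp.norm_sub_norm_compl_sub_single hp y (Finset.range n)
  have hnn : 0 ≤ ∑ i ∈ Finset.range n, ‖y i‖ ^ (2 : ENNReal).toReal :=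
    Finset.sum_nonneg fun i _ => Real.rpow_nonneg (norm_nonneg _) _
  by_contra hlt
  push_neg at hlt
  have := Real.rpow_lt_rpow (norm_nonneg y) hlt hp
  linarith

lemma Q_tendsto (y : H2) :
    Filter.Tendsto (fun n => Q n y) Filter.atTop (nhds 0) := by
  have hy := (lp.hasSum_single (E := fun _ : ℕ => ℂ) (p := 2) (by norm_num) y).tendsto_sum_nat
  have : Filter.Tendsto (fun n => y - ∑ k ∈ Finset.range n, lp.single 2 k (y k))
      Filter.atTop (nhds (y - y)) := Filter.Tendsto.sub tendsto_const_nhds hy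
  rw [sub_self] at this
  simpa only [Q_apply] using this

end QuantumDiskAux

end QuantumDiskAux

open QuantumDiskAux

/-- Every compact operator on `ℓ²(ℕ)` belongs to the Toeplitz algebra, i.e. to the smallest
C*-subalgebra of `B(ℓ²(ℕ))` containing the unilateral shift `s`. -/
theorem quantum_disk_stmt8
    (s : lp (fun _ : ℕ => ℂ) 2 →L[ℂ] lp (fun _ : ℕ => ℂ) 2)
    (hs : ∀ n : ℕ, s (lp.single 2 n 1) = lp.single 2 (n + 1) 1)
    (A : lp (fun _ : ℕ => ℂ) 2 →L[ℂ] lp (fun _ : ℕ => ℂ) 2)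
    (hA : IsCompactOperator ⇑A) :
    A ∈ StarAlgebra.elemental ℂ s := by
  have hs' : ∀ n : ℕ, s (ee n) = ee (n + 1) := hs
  -- the finite-rank truncations of `A`
  set B : ℕ → (H2 →L[ℂ] H2) := fun n =>
    ∑ k ∈ Finset.range n, Rk (ee k) (ContinuousLinearMap.adjoint A (ee k)) with hB
  have hBmem : ∀ n, B n ∈ StarAlgebra.elemental ℂ s := fun n =>
    sum_mem fun k _ => Rk_mem s hs' _ _
  -- the key identity `A - B n = Q n ∘ A`
  have hQA : ∀ n x, A x - B n x = Q n (A x) := by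
    intro n x
    rw [Q_apply, hB]
    congr 1
    simp only [ContinuousLinearMap.coe_sum', Finset.sum_apply]
    refine Finset.sum_congr rfl fun k _ => ?_
    rw [Rk_apply, ContinuousLinearMap.adjoint_inner_left, inner_ee, smul_ee]
  -- convergence B n → A
  have hTend : Filter.Tendsto B Filter.atTop (nhds A) := by
    rw [Metric.tendsto_atTop]
    intro ε hε
    obtain ⟨K, hK, hKm⟩ := hA
    obtain ⟨δ, hδpos, hδ⟩ := Metric.mem_nhds_iff.mp hKm
    set ε' : ℝ := ε * δ / 8 with hε'
    have hε'pos : 0 < ε' := by positivity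
    obtain ⟨t, htfin, hcover⟩ := Metric.totallyBounded_iff.mp hK.totallyBounded ε' hε'pos
    have hev : ∀ᶠ n in Filter.atTop, ∀ c ∈ t, ‖Q n c‖ < ε' := by
      rw [htfin.eventually_all]
      intro c _
      have h1 : Filter.Tendsto (fun n => ‖Q n c‖) Filter.atTop (nhds 0) := by
        simpa using (Q_tendsto c).norm
      exact h1.eventually_lt_const hε'pos
    obtain ⟨N, hN⟩ := hev.exists_forall_of_atTop
    refine ⟨N, fun n hn => ?_⟩
    have hband : ∀ y ∈ K, ‖Q n y‖ ≤ 2 * ε' := by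
      intro y hy
      obtain ⟨c, hc, hyc⟩ := Set.mem_iUnion₂.mp (hcover hy)
      have : Q n y = Q n (y - c) + Q n c := by rw [map_sub]; abel
      rw [this]
      calc ‖Q n (y - c) + Q n c‖ ≤ ‖Q n (y - c)‖ + ‖Q n c‖ := norm_add_le _ _
        _ ≤ ‖y - c‖ + ‖Q n c‖ := by gcongr; exact Q_norm_le n _
        _ ≤ ε' + ε' := by
            gcongr
            · exact le_of_lt (by rwa [Metric.mem_ball, dist_eq_norm] at hyc)
            · exact le_of_lt (hN n hn c hc)
        _ = 2 * ε' := by ring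
    have hxb : ∀ x : H2, ‖A x - B n x‖ ≤ (ε / 2) * ‖x‖ := by
      intro x
      by_cases hx0 : x = 0
      · simp [hx0]
      have hxpos : 0 < ‖x‖ := norm_pos_iff.mpr hx0
      set c : ℝ := δ / (2 * ‖x‖) with hc
      have hcpos : 0 < c := by positivity
      have hmemK : A ((c : ℂ) • x) ∈ K := by
        apply hδ
        rw [Metric.mem_ball, dist_zero_right, norm_smul, Complex.norm_real, Real.norm_eq_abs,
          abs_of_pos hcpos, hc]
        rw [div_mul_eq_mul_div, mul_comm]
        calc ‖x‖ * δ / (2 * ‖x‖) = δ / 2 := by field_simp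
          _ < δ := by linarith
      have hlin : Q n (A ((c:ℂ) • x)) = (c:ℂ) • Q n (A x) := by
        rw [map_smul, map_smul]
      have hnorm : ‖Q n (A x)‖ = (1/c) * ‖Q n (A ((c:ℂ) • x))‖ := by
        rw [hlin, norm_smul, Complex.norm_real, Real.norm_eq_abs, abs_of_pos hcpos]
        field_simp
      rw [hQA, hnorm]
      have := hband _ hmemK
      calc (1/c) * ‖Q n (A ((c:ℂ) • x))‖ ≤ (1/c) * (2 * ε') := by
            gcongr
        _ = (ε/2) * ‖x‖ := by
            rw [hε', hc]
            field_simp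
            ring
    have hop : ‖B n - A‖ ≤ ε / 2 := by
      rw [← norm_neg, neg_sub]
      refine ContinuousLinearMap.opNorm_le_bound _ (by positivity) fun x => ?_
      simpa using hxb x
    rw [dist_eq_norm]
    calc ‖B n - A‖ ≤ ε / 2 := hop
      _ < ε := by linarith
  exact (StarAlgebra.elemental.isClosed ℂ s).mem_of_tendsto hTend
    (Filter.Eventually.of_forall hBmem)
end

section
/- Let T be the Toeplitz algebra, the smallest C*-subalgebra of B(ℓ²(ℕ)) containing the unilateral shift s, and let σ : T → C(𝕋, ℂ) be the symbol map, i.e. the unique unital *-homomorphism with σ(s)(z) = z whose kernel is the set of compact operators in T. If A ∈ T and σ(A) is invertible in C(𝕋, ℂ) (in particular, if σ(A) is a unitary element), then A is a Fredholm operator: the kernel of A is finite-dimensional and the range of A is closed and of finite codimension in ℓ²(ℕ). -/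
set_option synthInstance.maxHeartbeats 1000000
set_option maxHeartbeats 1000000

open scoped CStarAlgebra

section Atkinson

variable {E : Type*} [NormedAddCommGroup E] [InnerProductSpace ℂ E] [CompleteSpace E]

/-- If `T` has a left inverse modulo compact operators, its kernel is finite dimensional. -/
lemma atkinson_ker (T S : E →L[ℂ] E) (hK : IsCompactOperator ⇑(S * T - 1)) :
    FiniteDimensional ℂ (LinearMap.ker (T : E →ₗ[ℂ] E)) := by
  set K : E →L[ℂ] E := S * T - 1 with hKdef
  have hDcomp : IsCompact (closure (⇑K '' Metric.closedBall 0 1)) := by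
    have := hK.isCompact_closure_image_of_bounded (𝕜₁ := ℂ) (𝕜₂ := ℂ)
      (f := (K : E →ₗ[ℂ] E)) (S := Metric.closedBall 0 1) Metric.isBounded_closedBall
    simpa using this
  set Cset : Set E := Subtype.val '' (Metric.closedBall (0 : LinearMap.ker (T : E →ₗ[ℂ] E)) 1) with hCdef
  have hCeq : Cset = (LinearMap.ker (T : E →ₗ[ℂ] E) : Set E) ∩ Metric.closedBall (0 : E) 1 := by
    ext v
    constructor
    · rintro ⟨y, hy, rfl⟩
      refine ⟨y.2, ?_⟩
      simpa [Metric.mem_closedBall, dist_zero_right] using hy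
    · rintro ⟨hv1, hv2⟩
      refine ⟨⟨v, hv1⟩, ?_, rfl⟩
      simpa [Metric.mem_closedBall, dist_zero_right] using hv2
  have hCclosed : IsClosed Cset := by
    rw [hCeq]
    exact (ContinuousLinearMap.isClosed_ker T).inter Metric.isClosed_closedBall
  have hCsub : Cset ⊆ Neg.neg '' closure (⇑K '' Metric.closedBall 0 1) := by
    rintro v ⟨y, hy, rfl⟩
    have hTy : T (y : E) = 0 := y.2
    have hKy : K (y : E) = -(y : E) := by
      simp [hKdef, ContinuousLinearMap.sub_apply, ContinuousLinearMap.mul_apply, hTy]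
    refine ⟨K (y : E), subset_closure ⟨(y : E), ?_, rfl⟩, by rw [hKy, neg_neg]⟩
    simpa [Metric.mem_closedBall, dist_zero_right] using hy
  have hCcomp : IsCompact Cset :=
    ((hDcomp.image continuous_neg)).of_isClosed_subset hCclosed hCsub
  have hball : IsCompact (Metric.closedBall (0 : LinearMap.ker (T : E →ₗ[ℂ] E)) 1) := by
    rw [Topology.IsEmbedding.isCompact_iff Topology.IsEmbedding.subtypeVal]
    exact hCcomp
  exact FiniteDimensional.of_isCompact_closedBall₀ ℂ one_pos hball

/-- If `T` has a left inverse modulo compact operators, its range is closed. -/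
lemma atkinson_range (T S : E →L[ℂ] E) (hK : IsCompactOperator ⇑(S * T - 1)) :
    IsClosed (Set.range ⇑T) := by
  haveI hfin : FiniteDimensional ℂ (LinearMap.ker (T : E →ₗ[ℂ] E)) := atkinson_ker T S hK
  set N : Submodule ℂ E := LinearMap.ker (T : E →ₗ[ℂ] E) with hNdef
  haveI : CompleteSpace N := FiniteDimensional.complete ℂ N
  set M : Submodule ℂ E := Nᗮ with hMdef
  haveI : CompleteSpace M := N.isClosed_orthogonal.completeSpace_coe
  set K : E →L[ℂ] E := S * T - 1 with hKdef
  set f : M →L[ℂ] E := T.comp M.subtypeL with hfdef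
  have hbound : ∃ c : NNReal, ∀ x : M, ‖x‖ ≤ c * ‖f x‖ := by
    by_contra h
    push_neg at h
    choose x hx using fun n : ℕ => h (n + 1)
    have hxne : ∀ n, x n ≠ 0 := by
      intro n h0
      have := hx n
      rw [h0] at this
      simp at this
    set y : ℕ → M := fun n => ‖x n‖⁻¹ • x n with hydef
    have hy1 : ∀ n, ‖y n‖ = 1 := by
      intro n
      have : ‖x n‖ ≠ 0 := norm_ne_zero_iff.mpr (hxne n)
      rw [hydef]
      simp only [norm_smul, norm_inv, norm_norm]
      exact inv_mul_cancel₀ this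
    have hfy : ∀ n, ‖f (y n)‖ < 1 / ((n : ℝ) + 1) := by
      intro n
      have hxpos : (0 : ℝ) < ‖x n‖ := norm_pos_iff.mpr (hxne n)
      have hn : (0 : ℝ) < (n : ℝ) + 1 := by positivity
      have hlt : ((n : ℝ) + 1) * ‖f (x n)‖ < ‖x n‖ := by
        have := hx n
        push_cast at this ⊢
        exact_mod_cast this
      have : ‖f (y n)‖ = ‖x n‖⁻¹ * ‖f (x n)‖ := by
        simp [hydef, map_smul, norm_smul]
      rw [this, lt_div_iff₀ hn]
      calc ‖x n‖⁻¹ * ‖f (x n)‖ * ((n : ℝ) + 1)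
          = ‖x n‖⁻¹ * (((n : ℝ) + 1) * ‖f (x n)‖) := by ring
        _ < ‖x n‖⁻¹ * ‖x n‖ := by
            exact mul_lt_mul_of_pos_left hlt (inv_pos.mpr hxpos)
        _ = 1 := inv_mul_cancel₀ (ne_of_gt hxpos)
    have hfy0 : Filter.Tendsto (fun n => T ((y n : E))) Filter.atTop (nhds 0) := by
      apply squeeze_zero_norm (fun n => le_of_lt (hfy n))
      exact tendsto_one_div_add_atTop_nhds_zero_nat
    have hDcomp : IsCompact (closure (⇑K '' Metric.closedBall 0 1)) := by
      have := hK.isCompact_closure_image_of_bounded (𝕜₁ := ℂ) (𝕜₂ := ℂ)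
        (f := (K : E →ₗ[ℂ] E)) (S := Metric.closedBall 0 1) Metric.isBounded_closedBall
      simpa using this
    have hmem : ∀ n, K ((y n : E)) ∈ closure (⇑K '' Metric.closedBall 0 1) := by
      intro n
      apply subset_closure
      refine ⟨(y n : E), ?_, rfl⟩
      simp [Metric.mem_closedBall, dist_zero_right]
      exact le_of_eq (hy1 n)
    obtain ⟨z, hz, φ, hφmono, hφtend⟩ := hDcomp.tendsto_subseq hmem
    have hid : ∀ n, ((y n : E)) = S (T ((y n : E))) - K ((y n : E)) := by
      intro n
      simp [hKdef, ContinuousLinearMap.sub_apply, ContinuousLinearMap.mul_apply]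
    have hStend : Filter.Tendsto (fun n => S (T ((y (φ n) : E)))) Filter.atTop (nhds 0) := by
      have := (S.continuous.tendsto 0).comp (hfy0.comp hφmono.tendsto_atTop)
      simpa [Function.comp_def] using this
    have hytend : Filter.Tendsto (fun n => ((y (φ n) : E))) Filter.atTop (nhds (-z)) := by
      have := hStend.sub hφtend
      simp only [zero_sub] at this
      convert this using 2 with n
      exact hid (φ n)
    have hzM : -z ∈ M := by
      refine N.isClosed_orthogonal.mem_of_tendsto hytend ?_
      exact Filter.Eventually.of_forall fun n => (y (φ n)).2
    have hz1 : ‖(-z : E)‖ = 1 := by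
      have h1 : Filter.Tendsto (fun n => ‖((y (φ n) : E))‖) Filter.atTop (nhds ‖(-z : E)‖) :=
        hytend.norm
      have h2 : Filter.Tendsto (fun n => ‖((y (φ n) : E))‖) Filter.atTop (nhds 1) := by
        have : (fun n => ‖((y (φ n) : E))‖) = fun _ => (1 : ℝ) := by
          funext n
          exact hy1 (φ n)
        rw [this]
        exact tendsto_const_nhds
      exact tendsto_nhds_unique h1 h2
    have hzker : T (-z) = 0 := by
      have h1 : Filter.Tendsto (fun n => T ((y (φ n) : E))) Filter.atTop (nhds (T (-z))) :=
        (T.continuous.tendsto _).comp hytend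
      have h2 : Filter.Tendsto (fun n => T ((y (φ n) : E))) Filter.atTop (nhds 0) :=
        hfy0.comp hφmono.tendsto_atTop
      exact tendsto_nhds_unique h1 h2
    have : (-z) ∈ N ⊓ M := ⟨hzker, hzM⟩
    rw [N.inf_orthogonal_eq_bot] at this
    rw [Submodule.mem_bot] at this
    rw [this] at hz1
    simp at hz1
  obtain ⟨c, hc⟩ := hbound
  have hanti : AntilipschitzWith c f := f.antilipschitz_of_bound hc
  have hclosedrange : IsClosed (Set.range ⇑f) :=
    hanti.isClosed_range f.uniformContinuous
  have hre : Set.range ⇑T = Set.range ⇑f := by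
    apply Set.Subset.antisymm
    · rintro _ ⟨v, rfl⟩
      obtain ⟨a, ha, b, hb, rfl⟩ := N.exists_add_mem_mem_orthogonal v
      refine ⟨⟨b, hb⟩, ?_⟩
      have hTa : T a = 0 := ha
      simp [hfdef, map_add, hTa]
    · rintro _ ⟨w, rfl⟩
      exact ⟨(w : E), rfl⟩
  rw [hre]
  exact hclosedrange

end Atkinson

section Symbol

set_option maxHeartbeats 1000000
set_option synthInstance.maxHeartbeats 1000000

/-- In a unital C⋆-algebra `𝒜` with a morphism `σ` to `C(X, ℂ)`, any element whose image
under `σ` is invertible admits an "inverse modulo the kernel of `σ`". -/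
lemma exists_symbol_inverse {𝒜 X : Type*} [CStarAlgebra 𝒜] [TopologicalSpace X]
    [CompactSpace X] [T2Space X] [Nonempty X]
    (σ : 𝒜 →⋆ₐ[ℂ] C(X, ℂ)) (A : 𝒜) (hA : IsUnit (σ A)) :
    ∃ B : 𝒜, σ B * σ A = 1 ∧ σ A * σ B = 1 := by
  have hσcont : Continuous σ := map_continuous σ
  -- σ A vanishes nowhere
  have hne : ∀ z, σ A z ≠ 0 := by
    intro z h0
    have h1 := hA.unit.inv_mul
    rw [IsUnit.unit_spec] at h1
    have h2 := ContinuousMap.congr_fun h1 z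
    rw [ContinuousMap.mul_apply, h0, mul_zero, ContinuousMap.one_apply] at h2
    exact zero_ne_one h2
  -- minimum of |σ A| ^ 2
  obtain ⟨z₀, -, hz₀⟩ := IsCompact.exists_isMinOn (isCompact_univ (X := X))
    ⟨Classical.arbitrary X, Set.mem_univ _⟩
    ((continuous_norm.comp (map_continuous (σ A))).continuousOn)
  set ε : ℝ := ‖σ A z₀‖ ^ 2 with hεdef
  have hεpos : 0 < ε := by
    have h := norm_pos_iff.mpr (hne z₀)
    exact pow_pos h 2
  have hεle : ∀ z, ε ≤ ‖σ A z‖ ^ 2 := by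
    intro z
    exact pow_le_pow_left₀ (norm_nonneg _)
      (isMinOn_iff.mp hz₀ z (Set.mem_univ z)) 2
  -- the function inverting from below ε
  set f : ℂ → ℂ := fun w => ((max w.re ε : ℝ) : ℂ)⁻¹ with hfdef
  have hmaxne : ∀ t : ℝ, max t ε ≠ 0 := fun t =>
    ne_of_gt (lt_of_lt_of_le hεpos (le_max_right _ _))
  have hfcont : Continuous f := by
    apply Continuous.inv₀
    · exact Complex.continuous_ofReal.comp
        ((continuous_id.max continuous_const).comp Complex.continuous_re)
    · intro w
      simpa using Complex.ofReal_ne_zero.mpr (hmaxne w.re)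
  set x : 𝒜 := star A * A with hxdef
  have hx_sa : IsSelfAdjoint x := IsSelfAdjoint.star_mul_self A
  haveI hx_norm : IsStarNormal x := hx_sa.isStarNormal
  have hσx : σ x = star (σ A) * σ A := by
    rw [hxdef, map_mul, map_star]
  have hσx_sa : IsSelfAdjoint (σ x) := by
    rw [hσx]
    exact IsSelfAdjoint.star_mul_self (σ A)
  haveI hσx_norm : IsStarNormal (σ x) := hσx_sa.isStarNormal
  -- symbol of cfc
  have hmap : σ (cfc f x) = cfc f (σ x) :=
    StarAlgHom.map_cfc σ f x (hfcont.continuousOn) hσcont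
  suffices key : σ (cfc f x * star A) * σ A = 1 by
    exact ⟨cfc f x * star A, key, by rw [mul_comm]; exact key⟩
  have hval : ∀ w ∈ spectrum ℂ (σ x), f w * w = 1 := by
    rw [ContinuousMap.spectrum_eq_range]
    rintro _ ⟨z, rfl⟩
    have hw : (σ x) z = ((‖σ A z‖ ^ 2 : ℝ) : ℂ) := by
      rw [hσx]
      simp only [ContinuousMap.mul_apply, ContinuousMap.star_apply]
      rw [Complex.star_def, ← Complex.normSq_eq_conj_mul_self, ← Complex.sq_norm]
    rw [hw]
    have hre : (((‖σ A z‖ ^ 2 : ℝ) : ℂ)).re = ‖σ A z‖ ^ 2 :=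
      Complex.ofReal_re _
    have hge : ε ≤ ‖σ A z‖ ^ 2 := hεle z
    have hne0 : (‖σ A z‖ ^ 2 : ℝ) ≠ 0 :=
      ne_of_gt (lt_of_lt_of_le hεpos hge)
    simp only [hfdef, hre, max_eq_left hge]
    rw [← Complex.ofReal_inv, ← Complex.ofReal_mul, inv_mul_cancel₀ hne0]
    simp
  have h1 : σ (cfc f x * star A) = cfc f (σ x) * star (σ A) := by
    rw [map_mul, hmap, map_star]
  calc σ (cfc f x * star A) * σ A = cfc f (σ x) * (star (σ A) * σ A) := by
        rw [h1, mul_assoc]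
    _ = cfc f (σ x) * σ x := by rw [← hσx]
    _ = cfc f (σ x) * cfc (id : ℂ → ℂ) (σ x) := by rw [cfc_id ℂ (σ x)]
    _ = cfc (fun w => f w * id w) (σ x) := by
        rw [← cfc_mul f id (σ x) hfcont.continuousOn continuousOn_id]
    _ = cfc (fun _ : ℂ => (1 : ℂ)) (σ x) := cfc_congr hval
    _ = 1 := by
        have : (fun _ : ℂ => (1 : ℂ)) = (1 : ℂ → ℂ) := rfl
        rw [this, cfc_one ℂ (σ x)]

end Symbol


set_option maxHeartbeats 4000000
set_option synthInstance.maxHeartbeats 4000000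

/-- Let `T` be the Toeplitz algebra and `σ : T → C(𝕋, ℂ)` the symbol map, i.e. the unital
`*`-homomorphism sending the unilateral shift `s` to `z ↦ z`, whose kernel is the set of
compact operators in `T`.  If `A ∈ T` and `σ(A)` is invertible in `C(𝕋, ℂ)`, then `A` is a
Fredholm operator: its kernel is finite-dimensional and its range is closed and of finite
codimension in `ℓ²(ℕ)`. -/
theorem quantum_disk_stmt12
    (s : lp (fun _ : ℕ => ℂ) 2 →L[ℂ] lp (fun _ : ℕ => ℂ) 2)
    (hs : ∀ n : ℕ, s (lp.single 2 n 1) = lp.single 2 (n + 1) 1)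
    (σ : StarAlgebra.elemental ℂ s →⋆ₐ[ℂ] C({z : ℂ // ‖z‖ = 1}, ℂ))
    (hσs : σ ⟨s, StarAlgebra.elemental.self_mem ℂ s⟩ =
      ContinuousMap.mk Subtype.val continuous_subtype_val)
    (hσker : ∀ A : StarAlgebra.elemental ℂ s,
      σ A = 0 ↔
        IsCompactOperator
          ⇑(A : lp (fun _ : ℕ => ℂ) 2 →L[ℂ] lp (fun _ : ℕ => ℂ) 2))
    (A : StarAlgebra.elemental ℂ s)
    (hA : IsUnit (σ A)) :
    FiniteDimensional ℂ
        (LinearMap.ker ((A : lp (fun _ : ℕ => ℂ) 2 →L[ℂ] lp (fun _ : ℕ => ℂ) 2) :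
          lp (fun _ : ℕ => ℂ) 2 →ₗ[ℂ] lp (fun _ : ℕ => ℂ) 2)) ∧
    IsClosed (Set.range ⇑(A : lp (fun _ : ℕ => ℂ) 2 →L[ℂ] lp (fun _ : ℕ => ℂ) 2)) ∧
    FiniteDimensional ℂ
      (lp (fun _ : ℕ => ℂ) 2 ⧸
        LinearMap.range ((A : lp (fun _ : ℕ => ℂ) 2 →L[ℂ] lp (fun _ : ℕ => ℂ) 2) :
          lp (fun _ : ℕ => ℂ) 2 →ₗ[ℂ] lp (fun _ : ℕ => ℂ) 2)) := by
  haveI hcpt : CompactSpace {z : ℂ // ‖z‖ = 1} := by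
    have h1 : {z : ℂ | ‖z‖ = 1} = Metric.sphere (0 : ℂ) 1 := by
      ext z
      simp [mem_sphere_zero_iff_norm]
    have h2 : IsCompact {z : ℂ | ‖z‖ = 1} := by rw [h1]; exact isCompact_sphere 0 1
    exact isCompact_iff_compactSpace.mp h2
  haveI : Nonempty {z : ℂ // ‖z‖ = 1} := ⟨⟨1, by simp⟩⟩
  haveI hclosed : IsClosed ((StarAlgebra.elemental ℂ s :
      StarSubalgebra ℂ (lp (fun _ : ℕ => ℂ) 2 →L[ℂ] lp (fun _ : ℕ => ℂ) 2)) :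
      Set (lp (fun _ : ℕ => ℂ) 2 →L[ℂ] lp (fun _ : ℕ => ℂ) 2)) :=
    StarAlgebra.elemental.isClosed ℂ s
  obtain ⟨Bop, hcomm, hcomm'⟩ := exists_symbol_inverse σ A hA
  -- compact perturbations
  have hBA : σ (Bop * A - 1) = 0 := by
    rw [map_sub, map_mul, map_one, hcomm, sub_self]
  have hABstar : σ (star (A * Bop - 1)) = 0 := by
    rw [map_star, map_sub, map_mul, map_one, hcomm', sub_self, star_zero]
  have hK1 := (hσker _).mp hBA
  have hK2 := (hσker _).mp hABstar
  set T := (A : lp (fun _ : ℕ => ℂ) 2 →L[ℂ] lp (fun _ : ℕ => ℂ) 2) with hTdef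
  set Sop := (Bop : lp (fun _ : ℕ => ℂ) 2 →L[ℂ] lp (fun _ : ℕ => ℂ) 2) with hSdef
  have e1 : ((Bop * A - 1 : StarAlgebra.elemental ℂ s) :
      lp (fun _ : ℕ => ℂ) 2 →L[ℂ] lp (fun _ : ℕ => ℂ) 2) = Sop * T - 1 := by
    push_cast
    rfl
  have e2 : ((star (A * Bop - 1) : StarAlgebra.elemental ℂ s) :
      lp (fun _ : ℕ => ℂ) 2 →L[ℂ] lp (fun _ : ℕ => ℂ) 2) = star Sop * star T - 1 := by
    push_cast
    rw [star_sub, star_mul, star_one]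
    rfl
  rw [e1] at hK1
  rw [e2] at hK2
  have hker : FiniteDimensional ℂ (LinearMap.ker (T : lp (fun _ : ℕ => ℂ) 2 →ₗ[ℂ] lp (fun _ : ℕ => ℂ) 2)) := atkinson_ker T Sop hK1
  have hrange : IsClosed (Set.range ⇑T) := atkinson_range T Sop hK1
  have hkerstar : FiniteDimensional ℂ (LinearMap.ker ((star T : lp (fun _ : ℕ => ℂ) 2 →L[ℂ] lp (fun _ : ℕ => ℂ) 2) : lp (fun _ : ℕ => ℂ) 2 →ₗ[ℂ] lp (fun _ : ℕ => ℂ) 2)) :=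
    atkinson_ker (star T) (star Sop) hK2
  refine ⟨hker, hrange, ?_⟩
  -- cokernel
  set R : Submodule ℂ (lp (fun _ : ℕ => ℂ) 2) := LinearMap.range (T : lp (fun _ : ℕ => ℂ) 2 →ₗ[ℂ] lp (fun _ : ℕ => ℂ) 2) with hRdef
  have hRclosed : IsClosed (R : Set (lp (fun _ : ℕ => ℂ) 2)) := by
    have : (R : Set (lp (fun _ : ℕ => ℂ) 2)) = Set.range ⇑T := by
      rw [hRdef]
      ext v
      simp [LinearMap.mem_range, Set.mem_range]
    rw [this]
    exact hrange
  haveI : CompleteSpace R := hRclosed.completeSpace_coe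
  have hcompl : IsCompl R Rᗮ := Submodule.isCompl_orthogonal_of_hasOrthogonalProjection
  have horth : Rᗮ = LinearMap.ker ((star T : lp (fun _ : ℕ => ℂ) 2 →L[ℂ] lp (fun _ : ℕ => ℂ) 2) : lp (fun _ : ℕ => ℂ) 2 →ₗ[ℂ] lp (fun _ : ℕ => ℂ) 2) := by
    ext v
    rw [Submodule.mem_orthogonal, LinearMap.mem_ker, ContinuousLinearMap.coe_coe]
    constructor
    · intro h
      have h2 : ∀ u, @inner ℂ _ _ u ((star T) v) = 0 := by
        intro u
        rw [ContinuousLinearMap.star_eq_adjoint, ContinuousLinearMap.adjoint_inner_right]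
        exact h (T u) (LinearMap.mem_range_self _ u)
      have := h2 ((star T) v)
      rwa [inner_self_eq_zero] at this
    · intro h u hu
      obtain ⟨w, rfl⟩ := hu
      rw [ContinuousLinearMap.coe_coe, ← ContinuousLinearMap.adjoint_inner_right, ← ContinuousLinearMap.star_eq_adjoint, h,
        inner_zero_right]
  haveI hfinorth : FiniteDimensional ℂ Rᗮ := by
    rw [horth]
    exact hkerstar
  have equiv := Submodule.quotientEquivOfIsCompl R Rᗮ hcompl
  exact Module.Finite.equiv equiv.symm
end
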